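/- Let H be a graded connected Hopf algebra over ℂ and φ ∈ G_A a local character. If x ∈ H_d is a primitive homogeneous element of degree d ≥ 1, then φ(x) has a pole of order at most one: λ·φ(x) ∈ A_+ = ℂ[[λ]]. The same holds for log(φ)(x); indeed log(φ)(x) = φ(x) for primitive x of positive degree. -/

import Mathlib

open scoped TensorProduct

set_option synthInstance.maxHeartbeats 1000000
set_option maxHeartbeats 1600000
set_option linter.unnecessarySeqFocus false

noncomputable section

/-- The algebra `A = ℂ((λ))` of formal Laurent series with finite pole part. -/
abbrev LS := LaurentSeries ℂ

/-- `ℂ`-scalars commute with multiplication of Laurent series. -/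
instance : SMulCommClass ℂ LS LS := by
  constructor
  intro c a b
  show c • (a * b) = a * (c • b)
  rw [← HahnSeries.single_zero_mul_eq_smul, ← HahnSeries.single_zero_mul_eq_smul]
  ring

/-- Scalar tower for `ℂ`-scalars and Laurent series. -/
instance : IsScalarTower ℂ LS LS := by
  constructor
  intro c a b
  show (c • a) * b = c • (a * b)
  rw [← HahnSeries.single_zero_mul_eq_smul, ← HahnSeries.single_zero_mul_eq_smul]
  ring

/-- `A₊ = ℂ[[λ]]`: the holomorphic part. -/
def Aplus (f : LS) : Prop := ∀ n : ℤ, n < 0 → f.coeff n = 0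

/-- `A₋ = λ⁻¹ℂ[λ⁻¹]`: the polar part. -/
def Aminus (f : LS) : Prop := ∀ n : ℤ, 0 ≤ n → f.coeff n = 0

/-- The formal variable `λ`. -/
def lam : LS := HahnSeries.single (1 : ℤ) (1 : ℂ)

/-- `λ^k` for `k : ℤ`. -/
def lamZ (k : ℤ) : LS := HahnSeries.single k (1 : ℂ)

/-- `e^{cλ} = Σ_k c^k λ^k / k!` as a Laurent series. -/
def expL (c : ℂ) : LS :=
  HahnSeries.ofPowerSeries ℤ ℂ (PowerSeries.mk fun k => c ^ k / (k.factorial : ℂ))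

section Hopf

variable {H : Type} [Ring H] [HopfAlgebra ℂ H]

/-- Convolution product of linear maps from a Hopf algebra to `A`. -/
def conv (f g : H →ₗ[ℂ] LS) : H →ₗ[ℂ] LS :=
  LinearMap.mul' ℂ LS ∘ₗ TensorProduct.map f g ∘ₗ Coalgebra.comul

/-- The unit `ε` of the convolution algebra. -/
def epsA : H →ₗ[ℂ] LS := LinearMap.toSpanSingleton ℂ LS 1 ∘ₗ Coalgebra.counit

/-- Characters: algebra morphisms `H → A` sending `1` to `1`. -/
def IsCharacter (φ : H →ₗ[ℂ] LS) : Prop :=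
  φ 1 = 1 ∧ ∀ x y : H, φ (x * y) = φ x * φ y

/-- The group inverse of a character: `φ⁻¹ = φ ∘ S`. -/
def charInv (φ : H →ₗ[ℂ] LS) : H →ₗ[ℂ] LS := φ ∘ₗ HopfAlgebra.antipode (R := ℂ)

/-- Infinitesimal characters: `Z(xy) = Z(x)ε(y) + ε(x)Z(y)`. -/
def IsInfChar (Z : H →ₗ[ℂ] LS) : Prop :=
  ∀ x y : H, Z (x * y) = Z x * epsA y + epsA x * Z y

/-- The Lie bracket `[Z,Z'] = Z⋆Z' − Z'⋆Z` on infinitesimal characters. -/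
def lieBr (Z W : H →ₗ[ℂ] LS) : H →ₗ[ℂ] LS := conv Z W - conv W Z

/-- The adjoint action `Ad(g)L = g⋆L⋆g⁻¹`. -/
def Adc (g L : H →ₗ[ℂ] LS) : H →ₗ[ℂ] LS := conv g (conv L (charInv g))

/-- Convolution powers `Z^{⋆k}`. -/
def convPow (Z : H →ₗ[ℂ] LS) : ℕ → (H →ₗ[ℂ] LS)
  | 0 => epsA
  | k + 1 => conv Z (convPow Z k)

/-- `E = exp(Z)`, the convolution exponential: for each `x ∈ H` the series
`Σ_k Z^{⋆k}(x)/k!` stabilizes (a finite sum by connectedness) with value `E(x)`. -/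
def IsConvExp (Z E : H →ₗ[ℂ] LS) : Prop :=
  ∀ x : H, ∃ N : ℕ, ∀ M : ℕ, N ≤ M →
    E x = ∑ k ∈ Finset.range M, ((k.factorial : ℂ))⁻¹ • convPow Z k x

/- ℂ-valued (scalar) versions, for `β`-functions. -/

/-- Convolution product of ℂ-valued linear maps on a Hopf algebra. -/
def convC (f g : H →ₗ[ℂ] ℂ) : H →ₗ[ℂ] ℂ :=
  LinearMap.mul' ℂ ℂ ∘ₗ TensorProduct.map f g ∘ₗ Coalgebra.comul

/-- ℂ-valued characters. -/
def IsCharacterC (φ : H →ₗ[ℂ] ℂ) : Prop :=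
  φ 1 = 1 ∧ ∀ x y : H, φ (x * y) = φ x * φ y

/-- The group inverse of a ℂ-valued character. -/
def charInvC (φ : H →ₗ[ℂ] ℂ) : H →ₗ[ℂ] ℂ := φ ∘ₗ HopfAlgebra.antipode (R := ℂ)

/-- ℂ-valued infinitesimal characters. -/
def IsInfCharC (Z : H →ₗ[ℂ] ℂ) : Prop :=
  ∀ x y : H, Z (x * y) = Z x * Coalgebra.counit y + Coalgebra.counit x * Z y

end Hopf

section Graded

variable {H : Type} [Ring H] [HopfAlgebra ℂ H]
variable (𝒜 : ℕ → Submodule ℂ H) [GradedAlgebra 𝒜]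

/-- Connectedness: `H₀ = ℂ·1`. -/
def IsConnectedGrading : Prop := 𝒜 0 = Submodule.span ℂ {(1 : H)}

/-- The coproduct is grading-preserving: `Δ(H_n) ⊆ Σ_{i+j=n} H_i ⊗ H_j`. -/
def ComulGraded : Prop :=
  ∀ n : ℕ, ∀ x ∈ 𝒜 n, Coalgebra.comul (R := ℂ) x ∈
    ⨆ p : {p : ℕ × ℕ // p.1 + p.2 = n},
      LinearMap.range (TensorProduct.map ((𝒜 p.1.1).subtype) ((𝒜 p.1.2).subtype))

/-- The counit is grading-preserving: it vanishes in positive degrees. -/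
def CounitGraded : Prop := ∀ n : ℕ, 0 < n → ∀ x ∈ 𝒜 n, Coalgebra.counit (R := ℂ) x = 0

/-- The antipode is grading-preserving. -/
def AntipodeGraded : Prop := ∀ n : ℕ, ∀ x ∈ 𝒜 n, HopfAlgebra.antipode (R := ℂ) x ∈ 𝒜 n

/-- The grading biderivation `Y(x) = n·x` for `x ∈ H_n`. -/
def Ymap : H →ₗ[ℂ] H :=
  (DFinsupp.lsum ℕ fun n : ℕ => ((n : ℂ) • (𝒜 n).subtype)) ∘ₗ
    (DirectSum.decomposeLinearEquiv 𝒜).toLinearMap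

/-- `φ^t`, defined by `φ^t(x) = e^{tλn}·φ(x)` for homogeneous `x` of degree `n`. -/
def charScale (t : ℂ) (φ : H →ₗ[ℂ] LS) : H →ₗ[ℂ] LS :=
  (DFinsupp.lsum ℕ fun n : ℕ => (expL (t * (n : ℂ)) • (φ ∘ₗ (𝒜 n).subtype))) ∘ₗ
    (DirectSum.decomposeLinearEquiv 𝒜).toLinearMap

/-- `R̃(φ) = φ^{-1} ⋆ (φ ∘ Y)`. -/
def Rtilde (φ : H →ₗ[ℂ] LS) : H →ₗ[ℂ] LS := conv (charInv φ) (φ ∘ₗ Ymap 𝒜)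

/-- `(φm, φp)` is the Birkhoff decomposition of `φ`: `φ = φm^{-1} ⋆ φp`, i.e. `φm ⋆ φ = φp`,
with `φp` holomorphic and `φm − ε` a pure pole part. -/
def IsBirkhoff (φ φm φp : H →ₗ[ℂ] LS) : Prop :=
  IsCharacter φm ∧ IsCharacter φp ∧ (∀ x, Aplus (φp x)) ∧
    (∀ x, Aminus (φm x - epsA x)) ∧ conv φm φ = φp

/-- A character is local if the negative Birkhoff part of `φ^t` is independent of `t`. -/
def IsLocal (φ : H →ₗ[ℂ] LS) : Prop :=
  IsCharacter φ ∧ ∃ φm : H →ₗ[ℂ] LS, ∀ t : ℂ, ∃ φp, IsBirkhoff (charScale 𝒜 t φ) φm φp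

/-- `B = tildeβ_φ`:  `B(x) = (d/dt)|_{t=0} (φ^{-1} ⋆ φ^t)(x)`, coefficientwise. -/
def HasTildeBeta (φ B : H →ₗ[ℂ] LS) : Prop :=
  ∀ (x : H) (n : ℤ),
    HasDerivAt (fun t : ℂ => ((conv (charInv φ) (charScale 𝒜 t φ)) x).coeff n)
      ((B x).coeff n) 0

/-- The `β`-function `β_φ = −(Res φ₋) ∘ Y` of a local character whose negative
Birkhoff part is `φm`. -/
def betaFn (φm : H →ₗ[ℂ] LS) : H → ℂ := fun x => -((φm (Ymap 𝒜 x)).coeff (-1))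

end Graded

section Curves

variable {H : Type} [Ring H] [HopfAlgebra ℂ H]

/-- Pointwise (coefficientwise) derivative of a curve of maps `H → A`. -/
def HasDerivAtF (F : ℝ → (H →ₗ[ℂ] LS)) (F' : H →ₗ[ℂ] LS) (t : ℝ) : Prop :=
  ∀ (x : H) (n : ℤ), HasDerivAt (fun s : ℝ => ((F s) x).coeff n) ((F' x).coeff n) t

/-- Pointwise differentiability of a curve of maps `H → A`. -/
def PointwiseDifferentiable (F : ℝ → (H →ₗ[ℂ] LS)) : Prop :=
  ∀ (x : H) (n : ℤ), Differentiable ℝ (fun s : ℝ => ((F s) x).coeff n)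

end Curves

/-- The operator `R = P₊ − P₋` on Laurent series. -/
def Rop : LS →ₗ[ℂ] LS where
  toFun f :=
    { coeff := fun n => if n < 0 then -f.coeff n else f.coeff n
      isPWO_support' := f.isPWO_support'.mono (by
        intro n hn
        simp only [Function.mem_support] at hn ⊢
        by_cases h : n < 0 <;> simp_all) }
  map_add' f g := by
    ext n
    by_cases h : n < 0 <;> simp [h] <;> ring
  map_smul' c f := by
    ext n
    by_cases h : n < 0 <;> simp [h]



section AuxProof

lemma expL_coeff_nat (c : ℂ) (n : ℕ) : (expL c).coeff (n : ℤ) = c ^ n / n.factorial := by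
  simpa [expL] using HahnSeries.ofPowerSeries_apply_coeff
    (PowerSeries.mk fun k => c ^ k / (k.factorial : ℂ)) n

lemma expL_coeff_neg (c : ℂ) (n : ℤ) (hn : n < 0) : (expL c).coeff n = 0 := by
  rw [expL, HahnSeries.ofPowerSeries_apply]
  apply HahnSeries.embDomain_notin_range
  rintro ⟨m, hm⟩
  have : (m : ℤ) = n := hm
  omega

lemma expL_zero : expL 0 = 1 := by
  rw [expL]
  have : (PowerSeries.mk fun k => (0:ℂ) ^ k / (k.factorial : ℂ)) = 1 := by
    ext k
    cases k <;> simp [PowerSeries.coeff_mk, PowerSeries.coeff_one]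
  rw [this, map_one]

lemma Aplus_sub {f g : LS} (hf : Aplus f) (hg : Aplus g) : Aplus (f - g) := by
  intro n hn
  rw [HahnSeries.coeff_sub, hf n hn, hg n hn, sub_zero]

variable {H : Type} [Ring H] [HopfAlgebra ℂ H]

lemma conv_apply_prim (f g : H →ₗ[ℂ] LS) {x : H}
    (hprim : Coalgebra.comul (R := ℂ) x = x ⊗ₜ[ℂ] (1 : H) + (1 : H) ⊗ₜ[ℂ] x) :
    conv f g x = f x * g 1 + f 1 * g x := by
  simp [conv, hprim]

lemma conv_apply_one (f g : H →ₗ[ℂ] LS) : conv f g 1 = f 1 * g 1 := by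
  have h1 : Coalgebra.comul (R := ℂ) (1 : H) = (1 : H) ⊗ₜ[ℂ] (1 : H) := by
    rw [Bialgebra.comul_one, Algebra.TensorProduct.one_def]
  simp [conv, h1]

lemma epsA_one : epsA (1 : H) = 1 := by
  simp [epsA]

lemma epsA_eq_zero {x : H} (hx : Coalgebra.counit (R := ℂ) x = 0) : epsA x = 0 := by
  simp [epsA, hx]

lemma charScale_apply_mem (𝒜 : ℕ → Submodule ℂ H) [GradedAlgebra 𝒜] (t : ℂ)
    (φ : H →ₗ[ℂ] LS) {n : ℕ} {x : H} (hx : x ∈ 𝒜 n) :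
    charScale 𝒜 t φ x = expL (t * n) * φ x := by
  rw [charScale, LinearMap.comp_apply]
  have h1 : (DirectSum.decompose 𝒜 x : DirectSum ℕ fun i => 𝒜 i)
      = DFinsupp.single n (⟨x, hx⟩ : 𝒜 n) := by
    rw [DirectSum.decompose_of_mem 𝒜 hx]
    rfl
  show ((DFinsupp.lsum ℕ) fun m : ℕ => expL (t * (m : ℂ)) • (φ ∘ₗ (𝒜 m).subtype))
      (DirectSum.decompose 𝒜 x : DirectSum ℕ fun i => 𝒜 i) = expL (t * n) * φ x
  rw [h1, DFinsupp.lsum_single]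
  simp [smul_eq_mul]

lemma charScale_apply_one (𝒜 : ℕ → Submodule ℂ H) [GradedAlgebra 𝒜] (t : ℂ)
    (φ : H →ₗ[ℂ] LS) (hφ1 : φ 1 = 1) : charScale 𝒜 t φ 1 = 1 := by
  rw [charScale_apply_mem 𝒜 t φ (SetLike.one_mem_graded 𝒜)]
  simp [hφ1, expL_zero]

lemma convPow_one (Z : H →ₗ[ℂ] LS) (k : ℕ) : convPow Z k 1 = (Z 1) ^ k := by
  induction k with
  | zero => simp [convPow, epsA_one]
  | succ k ih => rw [convPow, conv_apply_one, ih, pow_succ, mul_comm]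

end AuxProof

/-- **Lemma.** Let `φ` be a local character of a graded connected Hopf algebra
and `x ∈ H_d` a primitive homogeneous element of degree `d ≥ 1`.  Then `φ(x)`
has a pole of order at most one: `λ·φ(x) ∈ A₊ = ℂ[[λ]]`.  The same holds for
`log(φ)(x)`; indeed `log(φ)(x) = φ(x)` for primitive `x` of positive degree
(`log φ`, the convolution logarithm, being the unique `Z` with
`exp(Z) = φ`). -/
theorem local_char_pole_order_one_on_primitives
    {H : Type} [Ring H] [HopfAlgebra ℂ H]
    (𝒜 : ℕ → Submodule ℂ H) [GradedAlgebra 𝒜]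
    (hconn : IsConnectedGrading 𝒜) (hΔ : ComulGraded 𝒜)
    (hcounit : CounitGraded 𝒜) (hS : AntipodeGraded 𝒜)
    (φ : H →ₗ[ℂ] LS) (hloc : IsLocal 𝒜 φ)
    (d : ℕ) (hd : 1 ≤ d) (x : H) (hx : x ∈ 𝒜 d)
    (hprim : Coalgebra.comul (R := ℂ) x = x ⊗ₜ[ℂ] (1 : H) + (1 : H) ⊗ₜ[ℂ] x) :
    Aplus (lam * φ x) ∧
    ∀ Z : H →ₗ[ℂ] LS, IsConvExp Z φ → Z x = φ x ∧ Aplus (lam * Z x) := by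
  obtain ⟨⟨hφ1, hφmul⟩, φm, hB⟩ := hloc
  have hεx : Coalgebra.counit (R := ℂ) x = 0 := hcounit d hd x hx
  -- first part
  have key : ∀ t : ℂ, Aplus (φm x + expL (t * d) * φ x) := by
    intro t
    obtain ⟨φp, hbm, hbp, hplus, hminus, heq⟩ := hB t
    have h1 : conv φm (charScale 𝒜 t φ) x = φm x + expL (t * d) * φ x := by
      rw [conv_apply_prim _ _ hprim, charScale_apply_one 𝒜 t φ hφ1,
        charScale_apply_mem 𝒜 t φ hx, hbm.1, mul_one, one_mul]
    have := hplus x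
    rw [← heq, h1] at this
    exact this
  have h0 : Aplus (φm x + φ x) := by
    have := key 0
    rwa [zero_mul, expL_zero, one_mul] at this
  have hg : Aplus ((expL ((1 : ℂ) * d) - 1) * φ x) := by
    have := Aplus_sub (key 1) h0
    rwa [show φm x + expL ((1:ℂ) * d) * φ x - (φm x + φ x)
        = (expL ((1:ℂ) * d) - 1) * φ x by ring] at this
  set g : LS := expL ((1 : ℂ) * d) - 1 with hgdef
  have hd0 : (d : ℂ) ≠ 0 := by
    exact_mod_cast Nat.cast_ne_zero.mpr (by omega)
  have hgc1 : g.coeff (1 : ℤ) = (d : ℂ) := by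
    rw [hgdef, HahnSeries.coeff_sub]
    rw [show ((1 : ℤ)) = ((1 : ℕ) : ℤ) by norm_num, expL_coeff_nat]
    simp [HahnSeries.coeff_one]
  have hgclt : ∀ n : ℤ, n < 1 → g.coeff n = 0 := by
    intro n hn
    rw [hgdef, HahnSeries.coeff_sub]
    rcases lt_or_eq_of_le (by omega : n ≤ 0) with h | h
    · rw [expL_coeff_neg _ n h, HahnSeries.coeff_one, if_neg (by omega), sub_zero]
    · subst h
      rw [show ((0 : ℤ)) = ((0 : ℕ) : ℤ) by norm_num, expL_coeff_nat]
      simp [HahnSeries.coeff_one]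
  have hgne : g ≠ 0 := by
    intro h
    rw [h] at hgc1
    simp at hgc1
    exact hd0 hgc1.symm
  have hgord : g.order = 1 := by
    apply le_antisymm
    · exact HahnSeries.order_le_of_coeff_ne_zero (by rw [hgc1]; exact hd0)
    · by_contra h
      push_neg at h
      exact (mt HahnSeries.coeff_order_eq_zero.mp hgne) (hgclt _ h)
  have hpole : Aplus (lam * φ x) := by
    by_cases hφx : φ x = 0
    · intro n hn
      rw [hφx, mul_zero, HahnSeries.coeff_zero]
    · have hordφ : (-1 : ℤ) ≤ (φ x).order := by
        by_contra h
        push_neg at h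
        have hne : g * φ x ≠ 0 := mul_ne_zero hgne hφx
        have hco := (mt HahnSeries.coeff_order_eq_zero.mp hne)
        rw [HahnSeries.order_mul hgne hφx, hgord] at hco
        exact hco (hg _ (by omega))
      intro n hn
      have : lam * φ x = HahnSeries.single (1 : ℤ) (1 : ℂ) * φ x := rfl
      rw [this, show n = (n - 1) + 1 by ring, HahnSeries.coeff_single_mul_add, one_mul]
      exact HahnSeries.coeff_eq_zero_of_lt_order (by omega)
  refine ⟨hpole, ?_⟩
  intro Z hZ
  -- Z 1 = 0
  have hZ1 : Z 1 = 0 := by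
    obtain ⟨N, hN⟩ := hZ 1
    have e1 := hN (N + 1) (by omega)
    have e2 := hN (N + 2) (by omega)
    rw [show N + 2 = (N + 1) + 1 by ring, Finset.sum_range_succ, ← e1] at e2
    have hz : ((((N+1).factorial : ℂ))⁻¹ • convPow Z (N+1) 1) = 0 :=
      left_eq_add.mp e2
    rw [convPow_one] at hz
    have hfac : (((N+1).factorial : ℂ)) ≠ 0 := Nat.cast_ne_zero.mpr (Nat.factorial_ne_zero _)
    have hz2 : (Z 1) ^ (N + 1) = 0 := by
      have := congrArg (fun y : LS => (((N+1).factorial : ℂ)) • y) hz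
      simpa [smul_smul, mul_inv_cancel₀ hfac] using this
    exact pow_eq_zero_iff (by omega) |>.mp hz2
  -- convolution powers on x
  have hc0 : convPow Z 0 x = 0 := epsA_eq_zero hεx
  have hc1 : convPow Z 1 x = Z x := by
    rw [convPow, conv_apply_prim _ _ hprim, convPow, epsA_one, epsA_eq_zero hεx]
    simp
  have hck : ∀ k : ℕ, convPow Z (k + 2) x = 0 := by
    intro k
    rw [show k + 2 = (k + 1) + 1 by ring, convPow, conv_apply_prim _ _ hprim,
      convPow_one, hZ1]
    simp [zero_pow (by omega : k + 1 ≠ 0)]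
  have hZx : Z x = φ x := by
    obtain ⟨N, hN⟩ := hZ x
    have e := hN (N + 2) (by omega)
    rw [e]
    rw [Finset.sum_eq_single_of_mem 1 (Finset.mem_range.mpr (by omega))]
    · simp [hc1]
    · intro b _ hb1
      match b, hb1 with
      | 0, _ => simp [hc0]
      | (k+2), _ => simp [hck k]
      | 1, h => exact absurd rfl h
  exact ⟨hZx, by rwa [hZx]⟩


end
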